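/- Let A and B be centered real Gaussian random variables with density functions φ_A and φ_B respectively. Then for every z ∈ ℝ and ε > 0, ∫_ℝ φ_B(x) · [P(A ∈ (z − x − ε, z − x + ε))]² dx ≤ ∫_ℝ φ_B(x) · [P(A ∈ (−x − ε, −x + ε))]² dx. -/

import Mathlib

open MeasureTheory Real

/-- The density of a centered real Gaussian with variance `v`. -/
noncomputable def gaussDensity (v : ℝ) : ℝ → ℝ :=
  fun y => (Real.sqrt (2 * π * v))⁻¹ * Real.exp (-y ^ 2 / (2 * v))

namespace Stmt6Aux

lemma gd_nonneg (v : ℝ) (y : ℝ) : 0 ≤ gaussDensity v y := by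
  unfold gaussDensity; positivity

lemma gd_continuous (v : ℝ) : Continuous (gaussDensity v) := by
  unfold gaussDensity
  exact continuous_const.mul ((continuous_pow 2).neg.div_const _).rexp

lemma gd_abs_anti {v : ℝ} (hv : 0 < v) {a b : ℝ} (h : |a| ≤ |b|) :
    gaussDensity v b ≤ gaussDensity v a := by
  unfold gaussDensity
  have hsq : a ^ 2 ≤ b ^ 2 := by
    rw [← sq_abs a, ← sq_abs b]
    exact pow_le_pow_left₀ (abs_nonneg a) h 2
  have hexp : Real.exp (-b ^ 2 / (2 * v)) ≤ Real.exp (-a ^ 2 / (2 * v)) := by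
    apply Real.exp_le_exp.mpr
    exact (div_le_div_iff_of_pos_right (by linarith)).mpr (by linarith)
  exact mul_le_mul_of_nonneg_left hexp (by positivity)

lemma gd_even (v : ℝ) (y : ℝ) : gaussDensity v (-y) = gaussDensity v y := by
  unfold gaussDensity; rw [neg_pow]; ring_nf

lemma gd_integrable {v : ℝ} (hv : 0 < v) : Integrable (gaussDensity v) := by
  have h : Integrable (fun x : ℝ => Real.exp (-(2 * v)⁻¹ * x ^ 2)) :=
    integrable_exp_neg_mul_sq (by positivity)
  have heq : gaussDensity v = fun x => (Real.sqrt (2 * π * v))⁻¹ *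
      Real.exp (-(2 * v)⁻¹ * x ^ 2) := by
    funext x; unfold gaussDensity; congr 1; ring
  rw [heq]
  exact h.const_mul _

/-- `F v ε u = ∫_{u-ε}^{u+ε}` of the Gaussian density with variance `v`. -/
noncomputable def F (v ε u : ℝ) : ℝ := ∫ y in (u - ε)..(u + ε), gaussDensity v y

lemma gd_intervalIntegrable (v a b : ℝ) :
    IntervalIntegrable (gaussDensity v) volume a b :=
  (gd_continuous v).intervalIntegrable a b

lemma F_nonneg {ε : ℝ} (hε : 0 ≤ ε) (v u : ℝ) : 0 ≤ F v ε u := by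
  apply intervalIntegral.integral_nonneg (by linarith)
  intro y _; exact gd_nonneg v y

lemma F_le {v : ℝ} (hv : 0 < v) {ε : ℝ} (hε : 0 < ε) (u : ℝ) :
    F v ε u ≤ (Real.sqrt (2 * π * v))⁻¹ * (2 * ε) := by
  have h : F v ε u ≤ ∫ _ in (u - ε)..(u + ε), (Real.sqrt (2 * π * v))⁻¹ := by
    apply intervalIntegral.integral_mono_on (by linarith) (gd_intervalIntegrable v _ _)
      intervalIntegrable_const
    intro y _
    unfold gaussDensity
    have h1 : Real.exp (-y ^ 2 / (2 * v)) ≤ 1 := by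
      rw [Real.exp_le_one_iff]
      apply div_nonpos_of_nonpos_of_nonneg
      · simp [sq_nonneg]
      · positivity
    calc (Real.sqrt (2 * π * v))⁻¹ * Real.exp (-y ^ 2 / (2 * v))
        ≤ (Real.sqrt (2 * π * v))⁻¹ * 1 :=
          mul_le_mul_of_nonneg_left h1 (by positivity)
      _ = (Real.sqrt (2 * π * v))⁻¹ := mul_one _
  have h2 : (∫ _ in (u - ε)..(u + ε), (Real.sqrt (2 * π * v))⁻¹)
      = (Real.sqrt (2 * π * v))⁻¹ * (2 * ε) := by
    rw [intervalIntegral.integral_const, smul_eq_mul]; ring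
  linarith [h2 ▸ h]

lemma F_even (v ε u : ℝ) : F v ε (-u) = F v ε u := by
  unfold F
  have h : (∫ y in (u - ε)..(u + ε), gaussDensity v y)
      = ∫ y in (u - ε)..(u + ε), gaussDensity v (-y) := by
    simp only [gd_even]
  rw [h, intervalIntegral.integral_comp_neg]
  congr 1 <;> ring

lemma F_anti {v : ℝ} (hv : 0 < v) {ε : ℝ} (hε : 0 < ε) {a b : ℝ}
    (ha : 0 ≤ a) (hab : a ≤ b) : F v ε b ≤ F v ε a := by
  have key : ∫ y in (a + ε)..(b + ε), gaussDensity v y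
      ≤ ∫ y in (a - ε)..(b - ε), gaussDensity v y := by
    have hshift : (∫ y in (a - ε)..(b - ε), gaussDensity v y)
        = ∫ y in (a + ε)..(b + ε), gaussDensity v (y - 2 * ε) := by
      rw [intervalIntegral.integral_comp_sub_right (gaussDensity v) (2 * ε)]
      congr 1 <;> ring
    rw [hshift]
    have hc2 : Continuous fun x : ℝ => gaussDensity v (x - 2 * ε) :=
      (gd_continuous v).comp (continuous_id.sub continuous_const)
    apply intervalIntegral.integral_mono_on (by linarith) (gd_intervalIntegrable v _ _)
      (hc2.intervalIntegrable _ _)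
    intro y hy
    apply gd_abs_anti hv
    obtain ⟨h1, _⟩ := hy
    have hy0 : (0:ℝ) ≤ y := by linarith
    rw [abs_of_nonneg hy0, abs_le]
    constructor <;> linarith
  have chop1 : F v ε a + ∫ y in (a + ε)..(b + ε), gaussDensity v y
      = ∫ y in (a - ε)..(b + ε), gaussDensity v y :=
    intervalIntegral.integral_add_adjacent_intervals (gd_intervalIntegrable v _ _)
      (gd_intervalIntegrable v _ _)
  have chop2 : (∫ y in (a - ε)..(b - ε), gaussDensity v y) + F v ε b
      = ∫ y in (a - ε)..(b + ε), gaussDensity v y :=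
    intervalIntegral.integral_add_adjacent_intervals (gd_intervalIntegrable v _ _)
      (gd_intervalIntegrable v _ _)
  linarith

lemma F_abs_anti {v : ℝ} (hv : 0 < v) {ε : ℝ} (hε : 0 < ε) {a b : ℝ}
    (h : |a| ≤ |b|) : F v ε b ≤ F v ε a := by
  have ha : F v ε a = F v ε |a| := by
    rcases abs_cases a with ⟨h1, _⟩ | ⟨h1, _⟩
    · rw [h1]
    · rw [h1, F_even]
  have hb : F v ε b = F v ε |b| := by
    rcases abs_cases b with ⟨h1, _⟩ | ⟨h1, _⟩
    · rw [h1]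
    · rw [h1, F_even]
  rw [ha, hb]
  exact F_anti hv hε (abs_nonneg a) h

lemma F_continuous (v ε : ℝ) : Continuous (F v ε) := by
  have hprim : Continuous fun t : ℝ => ∫ y in (0:ℝ)..t, gaussDensity v y :=
    intervalIntegral.continuous_primitive (fun a b => gd_intervalIntegrable v a b) 0
  have heq : F v ε = fun u => (∫ y in (0:ℝ)..(u + ε), gaussDensity v y)
      - ∫ y in (0:ℝ)..(u - ε), gaussDensity v y := by
    funext u
    rw [intervalIntegral.integral_interval_sub_left (gd_intervalIntegrable v _ _)
      (gd_intervalIntegrable v _ _)]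
    rfl
  rw [heq]
  exact (hprim.comp (continuous_id.add continuous_const)).sub
    (hprim.comp (continuous_id.sub continuous_const))

/-- `f = F²`. -/
noncomputable def f (v ε u : ℝ) : ℝ := (F v ε u) ^ 2

lemma f_abs_anti {v : ℝ} (hv : 0 < v) {ε : ℝ} (hε : 0 < ε) {a b : ℝ}
    (h : |a| ≤ |b|) : f v ε b ≤ f v ε a :=
  pow_le_pow_left₀ (F_nonneg hε.le v b) (F_abs_anti hv hε h) 2

lemma f_even (v ε u : ℝ) : f v ε (-u) = f v ε u := by
  unfold f; rw [F_even]

lemma f_continuous (v ε : ℝ) : Continuous (f v ε) := (F_continuous v ε).pow 2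

lemma f_bound {v : ℝ} (hv : 0 < v) {ε : ℝ} (hε : 0 < ε) (u : ℝ) :
    ‖f v ε u‖ ≤ ((Real.sqrt (2 * π * v))⁻¹ * (2 * ε)) ^ 2 := by
  rw [Real.norm_eq_abs, abs_of_nonneg (sq_nonneg _)]
  exact pow_le_pow_left₀ (F_nonneg hε.le v u) (F_le hv hε u) 2

end Stmt6Aux

open Stmt6Aux in
/-- For centered Gaussians `A`, `B`, the function
`z ↦ ∫ φ_B(x) [P(A ∈ (z−x−ε, z−x+ε))]² dx` is maximised at `z = 0`. -/
theorem stmt6 (σA σB : ℝ) (hσA : 0 < σA) (hσB : 0 < σB) (z ε : ℝ) (hε : 0 < ε) :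
    ∫ x, gaussDensity (σB ^ 2) x *
        (∫ y in (z - x - ε)..(z - x + ε), gaussDensity (σA ^ 2) y) ^ 2 ≤
      ∫ x, gaussDensity (σB ^ 2) x *
        (∫ y in (-x - ε)..(-x + ε), gaussDensity (σA ^ 2) y) ^ 2 := by
  have hv : (0:ℝ) < σA ^ 2 := by positivity
  have hw : (0:ℝ) < σB ^ 2 := by positivity
  set v := σA ^ 2
  set w := σB ^ 2
  -- abbreviations
  have hψint : Integrable (gaussDensity w) := gd_integrable hw
  have hψz : Integrable (fun x => gaussDensity w (z - x)) := hψint.comp_sub_left z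
  have hfc : Continuous (f v ε) := f_continuous v ε
  have hfzc : Continuous (fun x : ℝ => f v ε (z - x)) :=
    hfc.comp (continuous_const.sub continuous_id)
  set C := ((Real.sqrt (2 * π * v))⁻¹ * (2 * ε)) ^ 2 with hC
  have hb1 : ∃ c : ℝ, ∀ x, ‖f v ε x‖ ≤ c := ⟨C, fun x => f_bound hv hε x⟩
  have hb2 : ∃ c : ℝ, ∀ x, ‖f v ε (z - x)‖ ≤ c := ⟨C, fun x => f_bound hv hε (z - x)⟩
  have i1 : Integrable (fun x => f v ε x * gaussDensity w x) :=
    hψint.bdd_mul hfc.aestronglyMeasurable (ae_of_all _ hb1.choose_spec)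
  have i2 : Integrable (fun x => f v ε (z - x) * gaussDensity w x) :=
    hψint.bdd_mul hfzc.aestronglyMeasurable (ae_of_all _ hb2.choose_spec)
  have i3 : Integrable (fun x => f v ε x * gaussDensity w (z - x)) :=
    hψz.bdd_mul hfc.aestronglyMeasurable (ae_of_all _ hb1.choose_spec)
  have i4 : Integrable (fun x => f v ε (z - x) * gaussDensity w (z - x)) :=
    hψz.bdd_mul hfzc.aestronglyMeasurable (ae_of_all _ hb2.choose_spec)
  -- pointwise rearrangement inequality
  have hpt : ∀ x, 0 ≤ (gaussDensity w x - gaussDensity w (z - x)) * (f v ε x - f v ε (z - x)) := by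
    intro x
    rcases le_total |x| |z - x| with h | h
    · exact mul_nonneg (sub_nonneg.mpr (gd_abs_anti hw h))
        (sub_nonneg.mpr (f_abs_anti hv hε h))
    · have h1 := sub_nonpos.mpr (gd_abs_anti hw h)
      have h2 := sub_nonpos.mpr (f_abs_anti hv hε h)
      nlinarith
  have hint_nonneg : 0 ≤ ∫ x,
      (gaussDensity w x - gaussDensity w (z - x)) * (f v ε x - f v ε (z - x)) :=
    integral_nonneg hpt
  -- substitution identities
  have sub1 : (∫ x, f v ε (z - x) * gaussDensity w (z - x))
      = ∫ x, f v ε x * gaussDensity w x :=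
    integral_sub_left_eq_self (fun x => f v ε x * gaussDensity w x) volume z
  have sub2 : (∫ x, f v ε x * gaussDensity w (z - x))
      = ∫ x, f v ε (z - x) * gaussDensity w x := by
    have h := integral_sub_left_eq_self (fun x => f v ε (z - x) * gaussDensity w x) volume z
    simpa [sub_sub_cancel] using h
  -- expand the nonnegative integral
  have expand : (∫ x,
      (gaussDensity w x - gaussDensity w (z - x)) * (f v ε x - f v ε (z - x)))
      = (∫ x, f v ε x * gaussDensity w x) - (∫ x, f v ε (z - x) * gaussDensity w x)
        - ((∫ x, f v ε x * gaussDensity w (z - x))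
          - ∫ x, f v ε (z - x) * gaussDensity w (z - x)) := by
    have e : (fun x => (gaussDensity w x - gaussDensity w (z - x)) * (f v ε x - f v ε (z - x)))
        = fun x => (f v ε x * gaussDensity w x - f v ε (z - x) * gaussDensity w x)
          - (f v ε x * gaussDensity w (z - x) - f v ε (z - x) * gaussDensity w (z - x)) := by
      funext x; ring
    have i12 : Integrable (fun x => f v ε x * gaussDensity w x
        - f v ε (z - x) * gaussDensity w x) := i1.sub i2
    have i34 : Integrable (fun x => f v ε x * gaussDensity w (z - x)
        - f v ε (z - x) * gaussDensity w (z - x)) := i3.sub i4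
    rw [e, integral_sub i12 i34, integral_sub i1 i2, integral_sub i3 i4]
  have key : (∫ x, f v ε (z - x) * gaussDensity w x)
      ≤ ∫ x, f v ε x * gaussDensity w x := by
    rw [expand, sub1, sub2] at hint_nonneg
    linarith
  -- rewrite the goal in terms of `f`
  have lhs_eq : (∫ x, gaussDensity w x *
      (∫ y in (z - x - ε)..(z - x + ε), gaussDensity v y) ^ 2)
      = ∫ x, f v ε (z - x) * gaussDensity w x := by
    congr 1; funext x
    show gaussDensity w x * (F v ε (z - x)) ^ 2 = _
    unfold f; ring
  have rhs_eq : (∫ x, gaussDensity w x *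
      (∫ y in (-x - ε)..(-x + ε), gaussDensity v y) ^ 2)
      = ∫ x, f v ε x * gaussDensity w x := by
    congr 1; funext x
    show gaussDensity w x * (F v ε (-x)) ^ 2 = _
    have : (F v ε (-x)) ^ 2 = f v ε x := by rw [← f_even v ε x]; rfl
    rw [this]; ring
  rw [lhs_eq, rhs_eq]
  exact key
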